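/- arXiv:1501.07446 — 5 statements merged into one kernel-verified Lean document; each statement's English description precedes it below -/
import Mathlib

section
/- Let a, b, k, l, g be integers with g ≥ 1, gcd(a,b) = 1 and gcd(k,l) = 1. Consider the chain complex of free abelian groups concentrated in degrees 0 to 3: 0 → ℤ →(c₃) ℤ² →(c₂) ℤ² →(c₁) ℤ → 0, where c₃ is given by the column vector (-l, k), c₂ by the matrix ((gka, gla), (gkb, glb)), and c₁ by the row vector (-b, a). Then the homology of this complex is ℤ/g in degree 1 and zero in all other degrees. -/
/-- The differential `c₁ : ℤ² → ℤ`, given by the row vector `(-b, a)`. -/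
abbrev c1Mat (a b : ℤ) : Matrix (Fin 1) (Fin 2) ℤ := !![-b, a]

/-- The differential `c₂ : ℤ² → ℤ²`, given by the matrix `((gka, gla), (gkb, glb))`. -/
abbrev c2Mat (a b k l g : ℤ) : Matrix (Fin 2) (Fin 2) ℤ :=
  !![g * k * a, g * l * a; g * k * b, g * l * b]

/-- The differential `c₃ : ℤ → ℤ²`, given by the column vector `(-l, k)`. -/
abbrev c3Mat (k l : ℤ) : Matrix (Fin 2) (Fin 1) ℤ := !![-l; k]

/-- Homology in degree 1: `ker c₁ / im c₂`. -/
abbrev H1 (a b k l g : ℤ) :=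
  LinearMap.ker (c1Mat a b).mulVecLin ⧸
    Submodule.comap (LinearMap.ker (c1Mat a b).mulVecLin).subtype
      (LinearMap.range (c2Mat a b k l g).mulVecLin)

/-- Homology in degree 2: `ker c₂ / im c₃`. -/
abbrev H2 (a b k l g : ℤ) :=
  LinearMap.ker (c2Mat a b k l g).mulVecLin ⧸
    Submodule.comap (LinearMap.ker (c2Mat a b k l g).mulVecLin).subtype
      (LinearMap.range (c3Mat k l).mulVecLin)

/-- Homology in degree 0: `ℤ / im c₁`. -/
abbrev H0 (a b : ℤ) := (Fin 1 → ℤ) ⧸ LinearMap.range (c1Mat a b).mulVecLin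

lemma c1_apply (a b : ℤ) (x : Fin 2 → ℤ) :
    (c1Mat a b).mulVecLin x = ![-b * x 0 + a * x 1] := by
  funext i; fin_cases i
  simp [Matrix.mulVecLin_apply, Matrix.mulVec, dotProduct, Fin.sum_univ_two]

lemma c2_apply (a b k l g : ℤ) (v : Fin 2 → ℤ) :
    (c2Mat a b k l g).mulVecLin v
      = ![g*k*a*v 0 + g*l*a*v 1, g*k*b*v 0 + g*l*b*v 1] := by
  funext i; fin_cases i <;>
  simp [Matrix.mulVecLin_apply, Matrix.mulVec, dotProduct, Fin.sum_univ_two]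

lemma c3_apply (k l : ℤ) (t : Fin 1 → ℤ) :
    (c3Mat k l).mulVecLin t = ![-l * t 0, k * t 0] := by
  funext i; fin_cases i <;>
  simp [Matrix.mulVecLin_apply, Matrix.mulVec, dotProduct, Fin.sum_univ_one]

lemma mem_ker_c1 (a b : ℤ) (x : Fin 2 → ℤ) :
    x ∈ LinearMap.ker (c1Mat a b).mulVecLin ↔ -b * x 0 + a * x 1 = 0 := by
  rw [LinearMap.mem_ker, c1_apply]
  constructor
  · intro h; simpa using congrFun h 0
  · intro h; funext i; fin_cases i; simpa using h

lemma mem_ker_c2 (a b k l g : ℤ) (x : Fin 2 → ℤ) :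
    x ∈ LinearMap.ker (c2Mat a b k l g).mulVecLin ↔
      g*k*a*x 0 + g*l*a*x 1 = 0 ∧ g*k*b*x 0 + g*l*b*x 1 = 0 := by
  rw [LinearMap.mem_ker, c2_apply]
  constructor
  · intro h; exact ⟨by simpa using congrFun h 0, by simpa using congrFun h 1⟩
  · intro ⟨h0, h1⟩; funext i; fin_cases i
    · simpa using h0
    · simpa using h1

lemma h1_part (a b k l g : ℤ) (hg : 1 ≤ g) (hab : Int.gcd a b = 1) (hkl : Int.gcd k l = 1) :
    Nonempty (H1 a b k l g ≃+ ZMod g.toNat) := by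
  set n := g.toNat with hn
  have hgn : (n : ℤ) = g := Int.toNat_of_nonneg (by linarith)
  set A := Int.gcdA a b
  set B := Int.gcdB a b
  have hA : a * A + b * B = 1 := by
    have := Int.gcd_eq_gcd_ab a b
    rw [hab] at this; exact_mod_cast this.symm
  set K := Int.gcdA k l
  set L := Int.gcdB k l
  have hK : k * K + l * L = 1 := by
    have := Int.gcd_eq_gcd_ab k l
    rw [hkl] at this; exact_mod_cast this.symm
  set Kr := LinearMap.ker (c1Mat a b).mulVecLin with hKr
  set N := Submodule.comap Kr.subtype (LinearMap.range (c2Mat a b k l g).mulVecLin) with hN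
  -- the linear map f : ker c1 → ZMod n
  set f : Kr →ₗ[ℤ] ZMod n :=
    { toFun := fun x => ((A * x.1 0 + B * x.1 1 : ℤ) : ZMod n)
      map_add' := by
        intro x y
        push_cast [Submodule.coe_add, Pi.add_apply]
        ring
      map_smul' := by
        intro c x
        simp only [Submodule.coe_smul, Pi.smul_apply, smul_eq_mul, RingHom.id_apply,
          zsmul_eq_mul]
        push_cast
        ring } with hf
  have hfapp : ∀ x : Kr, f x = ((A * x.1 0 + B * x.1 1 : ℤ) : ZMod n) := fun _ => rfl
  -- N ≤ ker f
  have hle : N ≤ LinearMap.ker f := by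
    intro x hx
    rw [hN, Submodule.mem_comap] at hx
    obtain ⟨v, hv⟩ := hx
    rw [c2_apply] at hv
    have h0 : (x : Fin 2 → ℤ) 0 = g*k*a*v 0 + g*l*a*v 1 := by
      have := congrFun hv 0; simpa [Submodule.subtype_apply] using this.symm
    have h1 : (x : Fin 2 → ℤ) 1 = g*k*b*v 0 + g*l*b*v 1 := by
      have := congrFun hv 1; simpa [Submodule.subtype_apply] using this.symm
    rw [LinearMap.mem_ker, hfapp, h0, h1]
    have : A * (g*k*a*v 0 + g*l*a*v 1) + B * (g*k*b*v 0 + g*l*b*v 1)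
        = g * ((k * v 0 + l * v 1) * (a * A + b * B)) := by ring
    rw [this, hA, mul_one]
    push_cast
    rw [← hgn]
    simp
  -- ker f ≤ N
  have hge : LinearMap.ker f ≤ N := by
    intro x hx
    rw [LinearMap.mem_ker, hfapp] at hx
    have hdvd : (n : ℤ) ∣ A * x.1 0 + B * x.1 1 :=
      (ZMod.intCast_zmod_eq_zero_iff_dvd _ _).mp hx
    rw [hgn] at hdvd
    obtain ⟨s, hs⟩ := hdvd
    have hker : -b * x.1 0 + a * x.1 1 = 0 := (mem_ker_c1 a b x.1).mp x.2
    rw [hN, Submodule.mem_comap]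
    refine ⟨![K * s, L * s], ?_⟩
    rw [c2_apply]
    funext i
    fin_cases i
    · show g*k*a*(K*s) + g*l*a*(L*s) = x.1 0
      have : g*k*a*(K*s) + g*l*a*(L*s) = (k*K + l*L) * (a * (g * s)) := by ring
      rw [this, hK, one_mul]
      rw [← hs]
      linear_combination x.1 0 * hA + B * hker
    · show g*k*b*(K*s) + g*l*b*(L*s) = x.1 1
      have : g*k*b*(K*s) + g*l*b*(L*s) = (k*K + l*L) * (b * (g * s)) := by ring
      rw [this, hK, one_mul]
      rw [← hs]
      linear_combination x.1 1 * hA - A * hker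
  -- f surjective
  have hsurj : Function.Surjective f := by
    intro z
    obtain ⟨t, ht⟩ := ZMod.intCast_surjective (n := n) z
    refine ⟨⟨![a * t, b * t], (mem_ker_c1 a b _).mpr (by simp; ring)⟩, ?_⟩
    rw [hfapp]
    show ((A * (a*t) + B * (b*t) : ℤ) : ZMod n) = z
    have : A * (a*t) + B * (b*t) = (a*A + b*B) * t := by ring
    rw [this, hA, one_mul, ht]
  -- assemble
  have hinj : Function.Injective (N.liftQ f hle) := by
    rw [← LinearMap.ker_eq_bot]
    exact Submodule.ker_liftQ_eq_bot N f hle hge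
  have hsurj' : Function.Surjective (N.liftQ f hle) := by
    intro z
    obtain ⟨x, hx⟩ := hsurj z
    exact ⟨N.mkQ x, by rw [Submodule.mkQ_apply, Submodule.liftQ_apply]; exact hx⟩
  exact ⟨(LinearEquiv.ofBijective (N.liftQ f hle) ⟨hinj, hsurj'⟩).toAddEquiv⟩

lemma h0_part (a b : ℤ) (hab : Int.gcd a b = 1) : Subsingleton (H0 a b) := by
  rw [Submodule.Quotient.subsingleton_iff, LinearMap.range_eq_top]
  have hA : a * Int.gcdA a b + b * Int.gcdB a b = 1 := by
    have := Int.gcd_eq_gcd_ab a b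
    rw [hab] at this; exact_mod_cast this.symm
  intro y
  refine ⟨![-(Int.gcdB a b) * y 0, Int.gcdA a b * y 0], ?_⟩
  rw [c1_apply]
  funext i; fin_cases i
  show -b * (-(Int.gcdB a b) * y 0) + a * (Int.gcdA a b * y 0) = y 0
  linear_combination y 0 * hA

lemma h2_part (a b k l g : ℤ) (hg : 1 ≤ g) (hab : Int.gcd a b = 1)
    (hkl : Int.gcd k l = 1) : Subsingleton (H2 a b k l g) := by
  rw [Submodule.Quotient.subsingleton_iff]
  have hA : a * Int.gcdA a b + b * Int.gcdB a b = 1 := by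
    have := Int.gcd_eq_gcd_ab a b
    rw [hab] at this; exact_mod_cast this.symm
  have hK : k * Int.gcdA k l + l * Int.gcdB k l = 1 := by
    have := Int.gcd_eq_gcd_ab k l
    rw [hkl] at this; exact_mod_cast this.symm
  set A := Int.gcdA a b; set B := Int.gcdB a b
  set K := Int.gcdA k l; set L := Int.gcdB k l
  rw [Submodule.eq_top_iff']
  intro x
  rw [Submodule.mem_comap]
  obtain ⟨h0, h1⟩ := (mem_ker_c2 a b k l g x.1).mp x.2
  have hg0 : g ≠ 0 := by omega
  have haS : a * (k * x.1 0 + l * x.1 1) = 0 := by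
    have hga : g * (a * (k * x.1 0 + l * x.1 1)) = 0 := by linear_combination h0
    exact (mul_eq_zero.mp hga).resolve_left hg0
  have hbS : b * (k * x.1 0 + l * x.1 1) = 0 := by
    have hgb : g * (b * (k * x.1 0 + l * x.1 1)) = 0 := by linear_combination h1
    exact (mul_eq_zero.mp hgb).resolve_left hg0
  have hS : k * x.1 0 + l * x.1 1 = 0 := by
    linear_combination A * haS + B * hbS + (-(k * x.1 0 + l * x.1 1)) * hA
  refine ⟨![K * x.1 1 - L * x.1 0], ?_⟩
  rw [c3_apply]
  funext i; fin_cases i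
  · show -l * (K * x.1 1 - L * x.1 0) = x.1 0
    linear_combination (-K) * hS + (x.1 0) * hK
  · show k * (K * x.1 1 - L * x.1 0) = x.1 1
    linear_combination (-L) * hS + (x.1 1) * hK

lemma h3_part (k l : ℤ) (hkl : Int.gcd k l = 1) :
    Subsingleton (LinearMap.ker (c3Mat k l).mulVecLin) := by
  have hK : k * Int.gcdA k l + l * Int.gcdB k l = 1 := by
    have := Int.gcd_eq_gcd_ab k l
    rw [hkl] at this; exact_mod_cast this.symm
  have : LinearMap.ker (c3Mat k l).mulVecLin = ⊥ := by
    rw [eq_bot_iff]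
    intro x hx
    rw [LinearMap.mem_ker, c3_apply] at hx
    have h0 : -l * x 0 = 0 := by simpa using congrFun hx 0
    have h1 : k * x 0 = 0 := by simpa using congrFun hx 1
    have : x 0 = 0 := by
      linear_combination Int.gcdA k l * h1 - Int.gcdB k l * h0 - x 0 * hK
    rw [Submodule.mem_bot]
    funext i; fin_cases i; exact this
  rw [this]
  infer_instance

/-- For integers `a, b, k, l, g` with `g ≥ 1`, `gcd(a,b) = 1`, `gcd(k,l) = 1`, the homology
of the chain complex `0 → ℤ →(c₃) ℤ² →(c₂) ℤ² →(c₁) ℤ → 0` is `ℤ/g` in degree `1` and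
trivial in degrees `0`, `2` and `3`. -/
theorem stmt0 (a b k l g : ℤ) (hg : 1 ≤ g) (hab : Int.gcd a b = 1) (hkl : Int.gcd k l = 1) :
    Nonempty (H1 a b k l g ≃+ ZMod g.toNat) ∧
    Subsingleton (H0 a b) ∧
    Subsingleton (H2 a b k l g) ∧
    Subsingleton (LinearMap.ker (c3Mat k l).mulVecLin) :=
  ⟨h1_part a b k l g hg hab hkl, h0_part a b hab, h2_part a b k l g hg hab hkl,
    h3_part k l hkl⟩
end

section
/- Let a, b, k, l, g be integers with g ≥ 1, gcd(a,b) = 1 and gcd(k,l) = 1. For the chain complex 0 → ℤ →(c₃) ℤ² →(c₂) ℤ² →(c₁) ℤ → 0 with c₃ = (-l, k)ᵀ, c₂ = ((gka, gla),(gkb, glb)), c₁ = (-b, a), the combinatorial Laplacians Δᵢ = cᵢᵀcᵢ + c_{i+1}c_{i+1}ᵀ satisfy det(Δ₃) = k²+l², det(Δ₂) = (a²+b²)·g²·(k²+l²)², det(Δ₁) = (a²+b²)²·g²·(k²+l²), and det(Δ₀) = a²+b². -/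
open Matrix
/-- For the chain complex `0 → ℤ →(c₃) ℤ² →(c₂) ℤ² →(c₁) ℤ → 0` with
`c₃ = (-l, k)ᵀ`, `c₂ = ((gka, gla), (gkb, glb))`, `c₁ = (-b, a)`, the combinatorial
Laplacians `Δᵢ = cᵢᵀcᵢ + c_{i+1}c_{i+1}ᵀ` (with `c₀ = 0`, `c₄ = 0`) have determinants
`det Δ₃ = k² + l²`, `det Δ₂ = (a² + b²)·g²·(k² + l²)²`,
`det Δ₁ = (a² + b²)²·g²·(k² + l²)`, `det Δ₀ = a² + b²`. -/
theorem stmt1 (a b k l g : ℤ) (hg : 1 ≤ g) (hab : Int.gcd a b = 1) (hkl : Int.gcd k l = 1) :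
    ((c3Mat k l)ᵀ * c3Mat k l).det = k ^ 2 + l ^ 2 ∧
    ((c2Mat a b k l g)ᵀ * c2Mat a b k l g + c3Mat k l * (c3Mat k l)ᵀ).det
      = (a ^ 2 + b ^ 2) * g ^ 2 * (k ^ 2 + l ^ 2) ^ 2 ∧
    ((c1Mat a b)ᵀ * c1Mat a b + c2Mat a b k l g * (c2Mat a b k l g)ᵀ).det
      = (a ^ 2 + b ^ 2) ^ 2 * g ^ 2 * (k ^ 2 + l ^ 2) ∧
    (c1Mat a b * (c1Mat a b)ᵀ).det = a ^ 2 + b ^ 2 := by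
  refine ⟨?_, ?_, ?_, ?_⟩ <;>
    simp [Matrix.det_fin_one, Matrix.det_fin_two, Matrix.mul_apply, Fin.sum_univ_succ, Matrix.transpose_apply, Matrix.vecHead, Matrix.vecTail, Matrix.vecMul, dotProduct] <;> ring
end

section
/- For the functions fₙ as in Lück's example, and for every λ ∈ (0, e^{-1}], the supremum over n ≥ 1 of fₙ(λ) equals 1/(-ln λ) + λ. -/
/-- Lück's example function `fₙ : [0,1] → ℝ`, defined piecewise:
`fₙ(λ) = λ` for `0 ≤ λ ≤ e^{-3n}`; linear interpolation on `[e^{-3n}, e^{-2n}]`;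
`fₙ(λ) = 1/(-ln λ) + λ` on `[e^{-2n}, e^{-n}]`; constant `1/n + e^{-n}` on
`[e^{-n}, 1/n + e^{-n}]`; and `fₙ(λ) = λ` on `[1/n + e^{-n}, 1]`. -/
noncomputable def luckF (n : ℕ) (x : ℝ) : ℝ :=
  if x ≤ Real.exp (-(3 * n : ℝ)) then x
  else if x ≤ Real.exp (-(2 * n : ℝ)) then
    ((Real.exp (-(2 * n : ℝ)) - x) * Real.exp (-(3 * n : ℝ))
        + (x - Real.exp (-(3 * n : ℝ))) * (1 / (2 * n : ℝ) + Real.exp (-(2 * n : ℝ))))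
      / (Real.exp (-(2 * n : ℝ)) - Real.exp (-(3 * n : ℝ)))
  else if x ≤ Real.exp (-(n : ℝ)) then 1 / (-Real.log x) + x
  else if x ≤ 1 / (n : ℝ) + Real.exp (-(n : ℝ)) then 1 / (n : ℝ) + Real.exp (-(n : ℝ))
  else x

lemma luck_ub (n : ℕ) (hn : 1 ≤ n) (x : ℝ) (hx0 : 0 < x) (hx1 : x ≤ Real.exp (-1)) :
    luckF n x ≤ 1 / (-Real.log x) + x := by
  have hL : 1 ≤ -Real.log x := by
    have := (Real.log_le_iff_le_exp hx0).mpr hx1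
    linarith
  have hLpos : 0 < -Real.log x := by linarith
  have hinv : 0 < 1 / (-Real.log x) := by positivity
  have hn1 : (1 : ℝ) ≤ (n : ℝ) := by exact_mod_cast hn
  unfold luckF
  split_ifs with h1 h2 h3 h4
  · linarith
  · -- interpolation branch
    push_neg at h1
    set a := Real.exp (-(3 * n : ℝ)) with ha
    set b := Real.exp (-(2 * n : ℝ)) with hb
    have hab : a < b := by
      apply Real.exp_lt_exp.mpr; nlinarith
    have hD : 0 < b - a := by linarith
    set s := (x - a) / (b - a) with hs
    have hs0 : 0 ≤ s := by
      apply div_nonneg <;> linarith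
    have hs1 : s ≤ 1 := by
      rw [div_le_one hD]; linarith
    have hxs : x = (1 - s) * a + s * b := by
      field_simp [hs]
      have h' : s * (b - a) = x - a := by rw [hs]; exact div_mul_cancel₀ _ hD.ne'
      linear_combination -h'
    -- convexity of exp
    have hconv : Real.exp ((1 - s) * (-(3 * n : ℝ)) + s * (-(2 * n : ℝ))) ≤
        (1 - s) * a + s * b := by
      have := convexOn_exp.2 (Set.mem_univ (-(3 * n : ℝ))) (Set.mem_univ (-(2 * n : ℝ)))
        (by linarith : (0:ℝ) ≤ 1 - s) hs0 (by ring)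
      simpa [smul_eq_mul, ha, hb] using this
    have hlog : -Real.log x ≤ (3 - s) * n := by
      have hxe : Real.exp (-((3 - s) * n)) ≤ x := by
        rw [hxs]
        convert hconv using 2
        ring
      have h := Real.log_le_log (Real.exp_pos _) hxe
      rw [Real.log_exp] at h
      linarith
    have hval : ((b - x) * a + (x - a) * (1 / (2 * n : ℝ) + b)) / (b - a)
        = x + s * (1 / (2 * (n:ℝ))) := by
      rw [hs]; field_simp; ring
    rw [hval]
    have hkey : s * (1 / (2 * (n:ℝ))) ≤ 1 / (-Real.log x) := by
      rw [mul_one_div, div_le_div_iff₀ (by positivity) hLpos]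
      nlinarith [mul_le_mul_of_nonneg_left hlog hs0,
        mul_nonneg (mul_nonneg (by linarith : (0:ℝ) ≤ 1 - s)
          (by linarith : (0:ℝ) ≤ 2 - s)) (by linarith : (0:ℝ) ≤ (n:ℝ))]
    linarith
  · linarith
  · -- constant branch
    push_neg at h3
    have hlog : -Real.log x < n := by
      have h := Real.log_lt_log (Real.exp_pos _) h3
      rw [Real.log_exp] at h
      linarith
    have : 1 / (n : ℝ) ≤ 1 / (-Real.log x) := by
      apply div_le_div_of_nonneg_left (by norm_num) hLpos (le_of_lt hlog)
    linarith
  · linarith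

/-- For every `λ ∈ (0, e^{-1}]`, the supremum over `n ≥ 1` of `fₙ(λ)` equals
`1/(-ln λ) + λ`. -/
theorem stmt4 (x : ℝ) (hx : x ∈ Set.Ioc (0 : ℝ) (Real.exp (-1))) :
    IsLUB {y : ℝ | ∃ n : ℕ, 1 ≤ n ∧ y = luckF n x} (1 / (-Real.log x) + x) := by
  obtain ⟨hx0, hx1⟩ := hx
  have hL : 1 ≤ -Real.log x := by
    have := (Real.log_le_iff_le_exp hx0).mpr hx1
    linarith
  set n : ℕ := ⌊-Real.log x⌋₊ with hn
  have hn1 : 1 ≤ n := Nat.le_floor (by exact_mod_cast hL)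
  have hn1' : (1:ℝ) ≤ (n:ℝ) := by exact_mod_cast hn1
  have hnL : (n : ℝ) ≤ -Real.log x := Nat.floor_le (by linarith)
  have hLn : -Real.log x < (n : ℝ) + 1 := Nat.lt_floor_add_one _
  have h2n : -Real.log x < 2 * n := by linarith
  have hxb : Real.exp (-(2 * n : ℝ)) < x := by
    have : Real.exp (-(2 * n : ℝ)) < Real.exp (Real.log x) :=
      Real.exp_lt_exp.mpr (by linarith)
    rwa [Real.exp_log hx0] at this
  have hxa : Real.exp (-(3 * n : ℝ)) < x := by
    refine lt_of_le_of_lt ?_ hxb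
    exact Real.exp_le_exp.mpr (by nlinarith)
  have hxn : x ≤ Real.exp (-(n : ℝ)) := by
    have : Real.exp (Real.log x) ≤ Real.exp (-(n : ℝ)) :=
      Real.exp_le_exp.mpr (by linarith)
    rwa [Real.exp_log hx0] at this
  apply IsGreatest.isLUB
  constructor
  · exact ⟨n, hn1, by rw [luckF, if_neg (not_le.mpr hxa), if_neg (not_le.mpr hxb), if_pos hxn]⟩
  · rintro y ⟨m, hm, rfl⟩
    exact luck_ub m hm x hx0 hx1
end

section
/- For each n ≥ 1, the functions fₙ of Lück's example satisfy ∫₀¹ fₙ(λ)/λ dλ ≥ ln 2 + 1. -/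
open MeasureTheory

lemma luckF_measurable (n : ℕ) : Measurable (luckF n) := by
  unfold luckF
  apply Measurable.ite (measurableSet_le measurable_id measurable_const) measurable_id
  apply Measurable.ite (measurableSet_le measurable_id measurable_const)
  · exact (((measurable_const.sub measurable_id).mul measurable_const).add
      ((measurable_id.sub measurable_const).mul measurable_const)).div measurable_const
  apply Measurable.ite (measurableSet_le measurable_id measurable_const)
  · exact (measurable_const.div Real.measurable_log.neg).add measurable_id
  exact Measurable.ite (measurableSet_le measurable_id measurable_const)
    measurable_const measurable_id

lemma luckF_key (n : ℕ) (hn : 1 ≤ n) (x : ℝ) (hx : x ∈ Set.Ioo (0:ℝ) 1) :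
    1 + Set.indicator (Set.Ioc (Real.exp (-(2*n:ℝ))) (Real.exp (-(n:ℝ))))
      (fun y => 1/(y * (-Real.log y))) x ≤ luckF n x / x := by
  obtain ⟨hx0, hx1⟩ := hx
  have hn1 : (1:ℝ) ≤ (n:ℝ) := by exact_mod_cast hn
  have hca : Real.exp (-(3*n:ℝ)) < Real.exp (-(2*n:ℝ)) :=
    Real.exp_lt_exp.mpr (by nlinarith)
  rw [le_div_iff₀ hx0]
  unfold luckF
  split_ifs with h1 h2 h3 h4
  · rw [Set.indicator_of_notMem (by
      intro hmem
      exact absurd (lt_of_lt_of_le hmem.1 h1) (not_lt.mpr hca.le))]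
    simp
  · rw [Set.indicator_of_notMem (fun hmem => absurd h2 (not_le.mpr hmem.1))]
    rw [add_zero, one_mul, le_div_iff₀ (by linarith)]
    have h2n : (0:ℝ) < 2*(n:ℝ) := by linarith
    have key : ((Real.exp (-(2 * n : ℝ)) - x) * Real.exp (-(3 * n : ℝ))
        + (x - Real.exp (-(3 * n : ℝ))) * (1 / (2 * n : ℝ) + Real.exp (-(2 * n : ℝ))))
        - x * (Real.exp (-(2 * n : ℝ)) - Real.exp (-(3 * n : ℝ)))
        = (x - Real.exp (-(3 * n : ℝ))) * (1 / (2 * n : ℝ)) := by ring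
    have hxc : Real.exp (-(3*n:ℝ)) ≤ x := le_of_not_ge h1
    have hpos : 0 ≤ (x - Real.exp (-(3 * n : ℝ))) * (1 / (2 * n : ℝ)) :=
      mul_nonneg (by linarith) (by positivity)
    linarith
  · have hmem : x ∈ Set.Ioc (Real.exp (-(2*n:ℝ))) (Real.exp (-(n:ℝ))) :=
      ⟨lt_of_not_ge h2, h3⟩
    rw [Set.indicator_of_mem hmem]
    have hL : 0 < -Real.log x := by
      have := Real.log_neg hx0 hx1; linarith
    have hx0' : x ≠ 0 := ne_of_gt hx0
    have hL' : -Real.log x ≠ 0 := ne_of_gt hL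
    have hL2 : Real.log x ≠ 0 := fun h => hL' (by rw [h]; ring)
    have : (1 + 1/(x * -Real.log x)) * x = 1/(-Real.log x) + x := by
      field_simp; ring
    linarith [le_of_eq this]
  · rw [Set.indicator_of_notMem (fun hmem => absurd hmem.2 h3)]
    rw [add_zero, one_mul]; exact h4
  · rw [Set.indicator_of_notMem (fun hmem => absurd hmem.2 h3)]
    simp

lemma luckF_nonneg (n : ℕ) (hn : 1 ≤ n) (x : ℝ) (hx : x ∈ Set.Ioo (0:ℝ) 1) :
    0 ≤ luckF n x := by
  obtain ⟨hx0, hx1⟩ := hx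
  have hn1 : (1:ℝ) ≤ (n:ℝ) := by exact_mod_cast hn
  have hca : Real.exp (-(3*n:ℝ)) < Real.exp (-(2*n:ℝ)) :=
    Real.exp_lt_exp.mpr (by nlinarith)
  unfold luckF
  split_ifs with h1 h2 h3 h4
  · linarith
  · apply div_nonneg _ (by linarith)
    have hxc : Real.exp (-(3*n:ℝ)) ≤ x := le_of_not_ge h1
    have h1' : 0 < Real.exp (-(3*n:ℝ)) := Real.exp_pos _
    have h2' : 0 < Real.exp (-(2*n:ℝ)) := Real.exp_pos _
    have h3' : 0 < 1 / (2 * (n:ℝ)) := by positivity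
    nlinarith
  · have hL : 0 < -Real.log x := by
      have := Real.log_neg hx0 hx1; linarith
    positivity
  · positivity
  · linarith

lemma luckF_bound (n : ℕ) (hn : 1 ≤ n) (x : ℝ) (hx : x ∈ Set.Ioo (0:ℝ) 1) :
    luckF n x / x ≤ 2 * Real.exp (3*n:ℝ) := by
  obtain ⟨hx0, hx1⟩ := hx
  have hn1 : (1:ℝ) ≤ (n:ℝ) := by exact_mod_cast hn
  have hexp1 : (1:ℝ) ≤ Real.exp (3*n:ℝ) := Real.one_le_exp (by linarith)
  by_cases h1 : x ≤ Real.exp (-(3 * n : ℝ))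
  · rw [show luckF n x = x by unfold luckF; rw [if_pos h1]]
    rw [div_self (ne_of_gt hx0)]; linarith
  -- x > e^{-3n}; show luckF n x ≤ 2
  have hxc : Real.exp (-(3*n:ℝ)) < x := lt_of_not_ge h1
  have hval : luckF n x ≤ 2 := by
    have hca : Real.exp (-(3*n:ℝ)) < Real.exp (-(2*n:ℝ)) :=
      Real.exp_lt_exp.mpr (by nlinarith)
    have hd1 : Real.exp (-(2*n:ℝ)) ≤ 1 := Real.exp_le_one_iff.mpr (by nlinarith)
    have he1 : Real.exp (-(n:ℝ)) ≤ 1 := Real.exp_le_one_iff.mpr (by nlinarith)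
    have hinv : (1:ℝ)/(2*(n:ℝ)) ≤ 1/2 := by
      apply one_div_le_one_div_of_le <;> linarith
    unfold luckF
    rw [if_neg h1]
    split_ifs with h2 h3 h4
    · rw [div_le_iff₀ (by linarith)]
      have hb' : Real.exp (-(3*n:ℝ)) ≤ 1 / (2 * (n:ℝ)) + Real.exp (-(2*n:ℝ)) := by
        have : (0:ℝ) < 1/(2*(n:ℝ)) := by positivity
        linarith
      nlinarith [mul_nonneg (sub_nonneg.mpr h2)
          (sub_nonneg.mpr hb'),
        mul_nonneg (sub_nonneg.mpr hca.le)
          (show (0:ℝ) ≤ 2 - (1 / (2 * (n:ℝ)) + Real.exp (-(2*n:ℝ))) by linarith)]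
    · have hL : (n:ℝ) ≤ -Real.log x := by
        have := Real.log_le_log hx0 h3
        rw [Real.log_exp] at this; linarith
      have : 1/(-Real.log x) ≤ 1/(n:ℝ) :=
        one_div_le_one_div_of_le (by linarith) hL
      have h1n : (1:ℝ)/(n:ℝ) ≤ 1 := by
        rw [div_le_one (by linarith)]; linarith
      linarith
    · have h1n : (1:ℝ)/(n:ℝ) ≤ 1 := by
        rw [div_le_one (by linarith)]; linarith
      have he1 : Real.exp (-(n:ℝ)) ≤ 1 := Real.exp_le_one_iff.mpr (by nlinarith)
      linarith
    · linarith
  calc luckF n x / x ≤ 2 / Real.exp (-(3*n:ℝ)) :=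
        div_le_div₀ (by norm_num) hval (Real.exp_pos _) hxc.le
    _ = 2 * Real.exp (3*n:ℝ) := by
        rw [Real.exp_neg, div_eq_mul_inv, inv_inv]

/-- For each `n ≥ 1`, `∫₀¹ fₙ(λ)/λ dλ ≥ ln 2 + 1`. -/
theorem stmt6 (n : ℕ) (hn : 1 ≤ n) :
    Real.log 2 + 1 ≤ ∫ x in Set.Ioo (0 : ℝ) 1, luckF n x / x := by
  have hn1 : (1:ℝ) ≤ (n:ℝ) := by exact_mod_cast hn
  set a := Real.exp (-(2*n:ℝ)) with ha_def
  set b := Real.exp (-(n:ℝ)) with hb_def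
  have ha0 : 0 < a := Real.exp_pos _
  have hab : a < b := Real.exp_lt_exp.mpr (by nlinarith)
  have hb1 : b < 1 := Real.exp_lt_one_iff.mpr (by nlinarith)
  set f0 : ℝ → ℝ := fun y => 1/(y * (-Real.log y)) with hf0_def
  -- continuity of f0 on Icc a b
  have hcont : ContinuousOn f0 (Set.Icc a b) := by
    apply ContinuousOn.div continuousOn_const
    · exact continuousOn_id.mul
        ((Real.continuousOn_log.mono (fun y hy => ne_of_gt (lt_of_lt_of_le ha0 hy.1))).neg)
    · intro y hy
      have hy0 : 0 < y := lt_of_lt_of_le ha0 hy.1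
      have hy1 : y < 1 := lt_of_le_of_lt hy.2 hb1
      have hL : 0 < -Real.log y := by have := Real.log_neg hy0 hy1; linarith
      positivity
  have hint0 : IntegrableOn f0 (Set.Ioc a b) :=
    (hcont.integrableOn_Icc).mono_set Set.Ioc_subset_Icc_self
  have hIndInt : Integrable (Set.indicator (Set.Ioc a b) f0) :=
    hint0.integrable_indicator measurableSet_Ioc
  -- integrability of the main integrand
  have hgmeas : Measurable (fun x => luckF n x / x) :=
    (luckF_measurable n).div measurable_id
  have hgint : IntegrableOn (fun x => luckF n x / x) (Set.Ioo 0 1) := by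
    apply Measure.integrableOn_of_bounded (M := 2 * Real.exp (3*n:ℝ))
      (by simp [lt_top_iff_ne_top]) hgmeas.aestronglyMeasurable
    · rw [ae_restrict_iff' measurableSet_Ioo]
      refine ae_of_all _ fun x hx => ?_
      rw [Real.norm_eq_abs, abs_le]
      constructor
      · have h1 : 0 ≤ luckF n x / x :=
          div_nonneg (luckF_nonneg n hn x hx) hx.1.le
        have : (0:ℝ) ≤ 2 * Real.exp (3*n:ℝ) := by positivity
        linarith
      · exact luckF_bound n hn x hx
  -- the indicator minorant
  have h1int : IntegrableOn (fun _ : ℝ => (1:ℝ)) (Set.Ioo 0 1) :=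
    integrableOn_const (by simp)
  have hsub : Set.Ioc a b ⊆ Set.Ioo (0:ℝ) 1 :=
    fun y hy => ⟨lt_trans ha0 hy.1, lt_of_le_of_lt hy.2 hb1⟩
  have hmin_int : IntegrableOn
      (fun x => 1 + Set.indicator (Set.Ioc a b) f0 x) (Set.Ioo 0 1) :=
    h1int.add hIndInt.integrableOn
  have hmono : ∫ x in Set.Ioo (0:ℝ) 1, (1 + Set.indicator (Set.Ioc a b) f0 x)
      ≤ ∫ x in Set.Ioo (0:ℝ) 1, luckF n x / x := by
    apply setIntegral_mono_on hmin_int hgint measurableSet_Ioo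
    intro x hx
    exact luckF_key n hn x hx
  refine le_trans (le_of_eq ?_) hmono
  rw [integral_add h1int hIndInt.integrableOn]
  have hI1 : ∫ _x in Set.Ioo (0:ℝ) 1, (1:ℝ) = 1 := by simp
  have hI2 : ∫ x in Set.Ioo (0:ℝ) 1, Set.indicator (Set.Ioc a b) f0 x
      = Real.log 2 := by
    rw [setIntegral_indicator measurableSet_Ioc]
    rw [Set.inter_eq_self_of_subset_right hsub]
    rw [← intervalIntegral.integral_of_le hab.le]
    have hFTC : ∫ x in a..b, f0 x
        = -Real.log (-Real.log b) - -Real.log (-Real.log a) := by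
      refine intervalIntegral.integral_eq_sub_of_hasDerivAt
        (f := fun y => -Real.log (-Real.log y)) ?_ ?_
      · intro x hx
        rw [Set.uIcc_of_le hab.le] at hx
        have hx0 : 0 < x := lt_of_lt_of_le ha0 hx.1
        have hx1 : x < 1 := lt_of_le_of_lt hx.2 hb1
        have hL : 0 < -Real.log x := by have := Real.log_neg hx0 hx1; linarith
        have h1 : HasDerivAt Real.log x⁻¹ x := Real.hasDerivAt_log (ne_of_gt hx0)
        have h2 : HasDerivAt (fun y => -Real.log y) (-x⁻¹) x := h1.neg
        have h3 : HasDerivAt (fun y => Real.log (-Real.log y))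
            ((-Real.log x)⁻¹ * -x⁻¹) x :=
          by have := (Real.hasDerivAt_log (ne_of_gt hL)).comp x h2; exact this
        have h4 := h3.neg
        convert h4 using 1
        · rfl
        rw [hf0_def]
        field_simp
      · exact (hcont.mono (by rw [Set.uIcc_of_le hab.le])).intervalIntegrable
    rw [hFTC]
    have hla : Real.log a = -(2*n:ℝ) := Real.log_exp _
    have hlb : Real.log b = -(n:ℝ) := Real.log_exp _
    simp only [hla, hlb, neg_neg]
    have hn0 : (n:ℝ) ≠ 0 := by linarith
    rw [show (2*(n:ℝ)) = 2 * (n:ℝ) from rfl, Real.log_mul two_ne_zero hn0]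
    ring
  rw [hI1, hI2]
  ring
end

section
/- For each n ≥ 1, the functions fₙ of Lück's example satisfy ∫₀¹ fₙ(λ)/λ dλ ≤ 4. -/
open MeasureTheory

set_option maxHeartbeats 1000000 in
/-- For each `n ≥ 1`, `∫₀¹ fₙ(λ)/λ dλ ≤ 4` (and this integral exists). -/
theorem stmt7 (n : ℕ) (hn : 1 ≤ n) :
    IntegrableOn (fun x => luckF n x / x) (Set.Ioo (0 : ℝ) 1) ∧
    (∫ x in Set.Ioo (0 : ℝ) 1, luckF n x / x) ≤ 4 := by

  have hn1 : (1:ℝ) ≤ (n:ℝ) := by exact_mod_cast hn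
  have hn0 : (0:ℝ) < n := by linarith
  obtain ⟨F, hF⟩ : ∃ F : ℝ → ℝ, F = fun x : ℝ => luckF n x / x := ⟨_, rfl⟩
  obtain ⟨a, ha⟩ : ∃ a : ℝ, a = Real.exp (-(3 * (n:ℝ))) := ⟨_, rfl⟩
  obtain ⟨b, hb⟩ : ∃ b : ℝ, b = Real.exp (-(2 * (n:ℝ))) := ⟨_, rfl⟩
  obtain ⟨d, hd⟩ : ∃ d : ℝ, d = Real.exp (-((n:ℝ))) := ⟨_, rfl⟩
  obtain ⟨c, hc⟩ : ∃ c : ℝ, c = 1 / (n:ℝ) + d := ⟨_, rfl⟩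
  have ha0 : 0 < a := ha ▸ Real.exp_pos _
  have hb0 : 0 < b := hb ▸ Real.exp_pos _
  have hd0 : 0 < d := hd ▸ Real.exp_pos _
  have hab : a < b := by rw [ha, hb]; exact Real.exp_lt_exp.2 (by linarith)
  have hbd : b < d := by rw [hb, hd]; exact Real.exp_lt_exp.2 (by linarith)
  have hd1 : d < 1 := by
    rw [hd]
    calc Real.exp (-(n:ℝ)) < Real.exp 0 := Real.exp_lt_exp.2 (by linarith)
      _ = 1 := Real.exp_zero
  have hlogb : Real.log b = -(2*(n:ℝ)) := by rw [hb, Real.log_exp]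
  have hlogd : Real.log d = -((n:ℝ)) := by rw [hd, Real.log_exp]
  have hc0 : 0 < c := by rw [hc]; positivity
  have hba : (0:ℝ) < b - a := by linarith
  -- piecewise descriptions of F
  have e1 : Set.EqOn F (fun _ => (1:ℝ)) (Set.Ioc 0 a) := by
    intro x hx
    simp only [hF, luckF, ← ha, ← hb, ← hd]
    rw [if_pos hx.2]
    exact div_self (ne_of_gt hx.1)
  have e2 : Set.EqOn F
      (fun x => (((b - x) * a + (x - a) * (1/(2*(n:ℝ)) + b)) / (b - a)) / x)
      (Set.Ioc a b) := by
    intro x hx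
    simp only [hF, luckF, ← ha, ← hb, ← hd]
    rw [if_neg (not_le.2 hx.1), if_pos hx.2]
  have e3 : Set.EqOn F (fun x => (1 / (-Real.log x) + x) / x) (Set.Ioc b d) := by
    intro x hx
    simp only [hF, luckF, ← ha, ← hb, ← hd]
    rw [if_neg (not_le.2 (hab.trans hx.1)), if_neg (not_le.2 hx.1), if_pos hx.2]
  have e4 : Set.EqOn F (fun x => max c x / x) (Set.Ioo d 1) := by
    intro x hx
    have hax : a < x := (hab.trans hbd).trans hx.1
    have hbx : b < x := hbd.trans hx.1
    simp only [hF, luckF, ← ha, ← hb, ← hd, ← hc]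
    rw [if_neg (not_le.2 hax), if_neg (not_le.2 hbx), if_neg (not_le.2 hx.1)]
    rcases le_or_gt x c with h | h
    · rw [if_pos h, max_eq_left h]
    · rw [if_neg (not_le.2 h), max_eq_right h.le]
  -- integrability on the pieces
  have I1 : IntegrableOn F (Set.Ioc 0 a) :=
    ((integrableOn_const measure_Ioc_lt_top.ne)).congr_fun e1.symm measurableSet_Ioc
  have contg2 : ContinuousOn
      (fun x => (((b - x) * a + (x - a) * (1/(2*(n:ℝ)) + b)) / (b - a)) / x)
      (Set.Icc a b) := by
    apply ContinuousOn.div _ continuousOn_id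
      (fun x hx => ne_of_gt (lt_of_lt_of_le ha0 hx.1))
    exact (Continuous.div_const (by continuity) _).continuousOn
  have I2 : IntegrableOn F (Set.Ioc a b) :=
    ((contg2.integrableOn_Icc).mono_set Set.Ioc_subset_Icc_self).congr_fun
      e2.symm measurableSet_Ioc
  have hlog3 : ∀ x ∈ Set.Icc b d, Real.log x ≤ -(n:ℝ) := by
    intro x hx
    have hx0 : 0 < x := lt_of_lt_of_le hb0 hx.1
    rw [← hlogd]
    exact Real.log_le_log hx0 hx.2
  have contg3 : ContinuousOn (fun x => (1 / (-Real.log x) + x) / x) (Set.Icc b d) := by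
    have hne : ∀ x ∈ Set.Icc b d, x ≠ 0 :=
      fun x hx => ne_of_gt (lt_of_lt_of_le hb0 hx.1)
    apply ContinuousOn.div _ continuousOn_id hne
    apply ContinuousOn.add _ continuousOn_id
    apply ContinuousOn.div continuousOn_const
    · exact (Real.continuousOn_log.mono (fun x hx => by simpa using hne x hx)).neg
    · intro x hx
      have h := hlog3 x hx
      intro h0
      have : Real.log x = 0 := by linarith [neg_eq_zero.1 h0]
      linarith
  have I3 : IntegrableOn F (Set.Ioc b d) :=
    ((contg3.integrableOn_Icc).mono_set Set.Ioc_subset_Icc_self).congr_fun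
      e3.symm measurableSet_Ioc
  have contg4 : ContinuousOn (fun x => max c x / x) (Set.Icc d 1) :=
    ContinuousOn.div (continuous_const.max continuous_id).continuousOn continuousOn_id
      (fun x hx => ne_of_gt (lt_of_lt_of_le hd0 hx.1))
  have I4 : IntegrableOn F (Set.Ioo d 1) :=
    ((contg4.integrableOn_Icc).mono_set Set.Ioo_subset_Icc_self).congr_fun
      e4.symm measurableSet_Ioo
  -- set decomposition
  have hset1 : Set.Ioc (0:ℝ) a ∪ Set.Ioc a b = Set.Ioc 0 b :=
    Set.Ioc_union_Ioc_eq_Ioc ha0.le hab.le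
  have hset2 : Set.Ioc (0:ℝ) b ∪ Set.Ioc b d = Set.Ioc 0 d :=
    Set.Ioc_union_Ioc_eq_Ioc hb0.le hbd.le
  have hset3 : Set.Ioc (0:ℝ) d ∪ Set.Ioo d 1 = Set.Ioo 0 1 := by
    ext x
    constructor
    · rintro (⟨h1, h2⟩ | ⟨h1, h2⟩)
      · exact ⟨h1, lt_of_le_of_lt h2 hd1⟩
      · exact ⟨hd0.trans h1, h2⟩
    · rintro ⟨h1, h2⟩
      rcases le_or_gt x d with h | h
      · exact Or.inl ⟨h1, h⟩
      · exact Or.inr ⟨h, h2⟩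
  have disj1 : Disjoint (Set.Ioc (0:ℝ) a) (Set.Ioc a b) := by
    rw [Set.disjoint_left]; rintro x ⟨_, h2⟩ ⟨h3, _⟩; exact absurd h2 (not_le.2 h3)
  have disj2 : Disjoint (Set.Ioc (0:ℝ) b) (Set.Ioc b d) := by
    rw [Set.disjoint_left]; rintro x ⟨_, h2⟩ ⟨h3, _⟩; exact absurd h2 (not_le.2 h3)
  have disj3 : Disjoint (Set.Ioc (0:ℝ) d) (Set.Ioo d 1) := by
    rw [Set.disjoint_left]; rintro x ⟨_, h2⟩ ⟨h3, _⟩; exact absurd h2 (not_le.2 h3)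
  have I12 : IntegrableOn F (Set.Ioc 0 b) := by rw [← hset1]; exact I1.union I2
  have I123 : IntegrableOn F (Set.Ioc 0 d) := by rw [← hset2]; exact I12.union I3
  have Iall : IntegrableOn F (Set.Ioo 0 1) := by rw [← hset3]; exact I123.union I4
  -- split the integral
  have hsplit : ∫ x in Set.Ioo (0:ℝ) 1, F x =
      (∫ x in Set.Ioc (0:ℝ) a, F x) + (∫ x in Set.Ioc a b, F x)
        + (∫ x in Set.Ioc b d, F x) + (∫ x in Set.Ioo d 1, F x) := by
    rw [← hset3, setIntegral_union disj3 measurableSet_Ioo I123 I4,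
        ← hset2, setIntegral_union disj2 measurableSet_Ioc I12 I3,
        ← hset1, setIntegral_union disj1 measurableSet_Ioc I1 I2]
  -- piece 1
  have B1 : ∫ x in Set.Ioc (0:ℝ) a, F x = a := by
    rw [setIntegral_congr_fun measurableSet_Ioc e1, setIntegral_const]
    rw [Real.volume_real_Ioc_of_le ha0.le]
    simp
  -- piece 2
  have hs2 : ∀ x ∈ Set.Ioc a b, F x ≤ (1/(2*(n:ℝ)) + b - a) / (b - a) := by
    intro x hx
    have hx0 : 0 < x := ha0.trans hx.1
    rw [e2 hx]
    dsimp only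
    rw [div_div, div_le_div_iff₀ (by positivity) hba]
    nlinarith [mul_pos (mul_pos hba ha0) (by positivity : (0:ℝ) < 1/(2*(n:ℝ)))]
  have B2 : ∫ x in Set.Ioc a b, F x ≤ 1/(2*(n:ℝ)) + b - a := by
    have h := setIntegral_mono_on I2 (integrableOn_const measure_Ioc_lt_top.ne)
      measurableSet_Ioc hs2
    rw [setIntegral_const, Real.volume_real_Ioc_of_le hab.le,
      smul_eq_mul] at h
    calc (∫ x in Set.Ioc a b, F x) ≤ (b - a) * ((1/(2*(n:ℝ)) + b - a) / (b - a)) := h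
      _ = 1/(2*(n:ℝ)) + b - a := by field_simp
  -- piece 3
  have hs3 : ∀ x ∈ Set.Ioc b d, F x ≤ (n:ℝ)⁻¹ * x⁻¹ + 1 := by
    intro x hx
    have hx0 : 0 < x := hb0.trans hx.1
    have hlx : Real.log x ≤ -(n:ℝ) := hlog3 x ⟨hx.1.le, hx.2⟩
    have hneg : (n:ℝ) ≤ -Real.log x := by linarith
    rw [e3 hx]
    dsimp only
    rw [add_div, div_self (ne_of_gt hx0)]
    have h1 : 1 / (-Real.log x) ≤ 1/(n:ℝ) := one_div_le_one_div_of_le hn0 hneg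
    have h2 : 1 / (-Real.log x) / x ≤ (1/(n:ℝ)) / x :=
      div_le_div_of_nonneg_right h1 hx0.le
    calc 1 / (-Real.log x) / x + 1 ≤ (1/(n:ℝ)) / x + 1 := by linarith
      _ = (n:ℝ)⁻¹ * x⁻¹ + 1 := by rw [one_div, div_eq_mul_inv]
  have int3i : IntegrableOn (fun x => (n:ℝ)⁻¹ * x⁻¹ + 1) (Set.Ioc b d) := by
    apply IntegrableOn.mono_set _ Set.Ioc_subset_Icc_self
    apply ContinuousOn.integrableOn_Icc
    exact (continuousOn_const.mul (continuousOn_id.inv₀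
      (fun x hx => ne_of_gt (lt_of_lt_of_le hb0 hx.1)))).add continuousOn_const
  have invint3 : IntervalIntegrable (fun x : ℝ => x⁻¹) volume b d := by
    refine intervalIntegral.intervalIntegrable_inv (fun x hx => ?_) continuousOn_id
    rw [Set.uIcc_of_le hbd.le] at hx
    exact ne_of_gt (lt_of_lt_of_le hb0 hx.1)
  have int3 : ∫ x in Set.Ioc b d, ((n:ℝ)⁻¹ * x⁻¹ + 1) = 1 + (d - b) := by
    rw [← intervalIntegral.integral_of_le hbd.le]
    rw [intervalIntegral.integral_add (invint3.const_mul _) intervalIntegrable_const]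
    rw [intervalIntegral.integral_const_mul, integral_inv_of_pos hb0 hd0,
      Real.log_div (ne_of_gt hd0) (ne_of_gt hb0), hlogb, hlogd,
      intervalIntegral.integral_const, smul_eq_mul, mul_one]
    have : -(n:ℝ) - -(2*(n:ℝ)) = (n:ℝ) := by ring
    rw [this]
    field_simp
  have B3 : ∫ x in Set.Ioc b d, F x ≤ 1 + (d - b) := by
    rw [← int3]
    exact setIntegral_mono_on I3 int3i measurableSet_Ioc hs3
  -- piece 4
  have hs4 : ∀ x ∈ Set.Ioo d 1, F x ≤ c * x⁻¹ + 1 := by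
    intro x hx
    have hx0 : 0 < x := hd0.trans hx.1
    rw [e4 hx]
    dsimp only
    have hmax : max c x ≤ c + x :=
      max_le (le_add_of_nonneg_right hx0.le) (le_add_of_nonneg_left hc0.le)
    calc max c x / x ≤ (c + x) / x := div_le_div_of_nonneg_right hmax hx0.le
      _ = c * x⁻¹ + 1 := by
        rw [add_div, div_self (ne_of_gt hx0), div_eq_mul_inv]
  have int4i : IntegrableOn (fun x => c * x⁻¹ + 1) (Set.Ioo d 1) := by
    apply IntegrableOn.mono_set _ Set.Ioo_subset_Icc_self
    apply ContinuousOn.integrableOn_Icc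
    exact (continuousOn_const.mul (continuousOn_id.inv₀
      (fun x hx => ne_of_gt (lt_of_lt_of_le hd0 hx.1)))).add continuousOn_const
  have invint4 : IntervalIntegrable (fun x : ℝ => x⁻¹) volume d 1 := by
    refine intervalIntegral.intervalIntegrable_inv (fun x hx => ?_) continuousOn_id
    rw [Set.uIcc_of_le hd1.le] at hx
    exact ne_of_gt (lt_of_lt_of_le hd0 hx.1)
  have int4 : ∫ x in Set.Ioo d 1, (c * x⁻¹ + 1) = c * (n:ℝ) + (1 - d) := by
    rw [← integral_Ioc_eq_integral_Ioo, ← intervalIntegral.integral_of_le hd1.le]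
    rw [intervalIntegral.integral_add (invint4.const_mul _) intervalIntegrable_const]
    rw [intervalIntegral.integral_const_mul, integral_inv_of_pos hd0 one_pos,
      Real.log_div one_ne_zero (ne_of_gt hd0), Real.log_one, hlogd,
      intervalIntegral.integral_const, smul_eq_mul, mul_one]
    ring
  have B4 : ∫ x in Set.Ioo d 1, F x ≤ c * (n:ℝ) + (1 - d) := by
    rw [← int4]
    exact setIntegral_mono_on I4 int4i measurableSet_Ioo hs4
  -- numeric bounds
  have hcn : c * (n:ℝ) = 1 + (n:ℝ) * d := by
    rw [hc]; field_simp
  have hnd : (n:ℝ) * d ≤ 1/2 := by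
    have h2 := Real.add_one_le_exp ((n:ℝ)/2)
    have hsq : Real.exp ((n:ℝ)) = Real.exp ((n:ℝ)/2) * Real.exp ((n:ℝ)/2) := by
      rw [← Real.exp_add]; ring_nf
    have hepos : (0:ℝ) < Real.exp ((n:ℝ)) := Real.exp_pos _
    have hdinv : d = (Real.exp ((n:ℝ)))⁻¹ := by rw [hd, Real.exp_neg]
    rw [hdinv, ← div_eq_mul_inv, div_le_iff₀ hepos]
    have hy := Real.exp_pos ((n:ℝ)/2)
    have hkey : ((n:ℝ)/2+1)*((n:ℝ)/2+1) ≤ Real.exp ((n:ℝ)/2) * Real.exp ((n:ℝ)/2) :=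
      mul_le_mul h2 h2 (by positivity) hy.le
    rw [hsq]
    nlinarith [hkey, sq_nonneg ((n:ℝ)-2)]
  have h12n : 1/(2*(n:ℝ)) ≤ 1/2 := by
    apply one_div_le_one_div_of_le (by norm_num) (by linarith)
  refine ⟨?_, ?_⟩
  · show IntegrableOn (fun x => luckF n x / x) (Set.Ioo (0:ℝ) 1) volume
    rw [← hF]; exact Iall
  have hgoal : (∫ x in Set.Ioo (0:ℝ) 1, luckF n x / x) = ∫ x in Set.Ioo (0:ℝ) 1, F x := by
    rw [hF]
  rw [hgoal, hsplit]
  linarith [B1, B2, B3, B4, hcn, hnd, h12n]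
end
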